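/- Let q be a real number with 0 < q < 1, let f(n) = ∑_{k=0}^d c_k n^k be a polynomial in n with rational coefficients c_k, and let a_n(q) be defined by the recurrence a_0(q) = 1 and a_n(q) = f(n) + (1 - q^{n-1}) a_{n-1}(q) for n ≥ 1. Then ∑_{n=1}^∞ a_n(q) q^n = ∑_{n=1}^∞ (∑_{i=1}^n f(i)) q^n ∏_{j=n+1}^∞ (1 - q^j). -/

import Mathlib

open Filter Finset Real Topology

private lemma weier_aux (x : ℕ → ℝ) (h0 : ∀ j, 0 ≤ x j) (h1 : ∀ j, x j ≤ 1) :
    ∀ k : ℕ, 1 - ∑ j ∈ Finset.range k, x j ≤ ∏ j ∈ Finset.range k, (1 - x j) := by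
  intro k
  induction k with
  | zero => simp
  | succ k ih =>
    rw [Finset.prod_range_succ, Finset.sum_range_succ]
    have hS : 0 ≤ ∑ j ∈ Finset.range k, x j := Finset.sum_nonneg fun j _ => h0 j
    have h2 : (1 - ∑ j ∈ Finset.range k, x j) * (1 - x k)
        ≤ (∏ j ∈ Finset.range k, (1 - x j)) * (1 - x k) :=
      mul_le_mul_of_nonneg_right ih (by linarith [h1 k])
    nlinarith [h0 k, mul_nonneg hS (h0 k)]

/-- Let `0 < q < 1`, let `f(n) = ∑_{k=0}^d c_k n^k` be a polynomial with rational
coefficients, and let `a_n(q)` satisfy `a_0(q) = 1`,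
`a_n(q) = f(n) + (1 - q^{n-1}) a_{n-1}(q)` for `n ≥ 1`. Then
`∑_{n=1}^∞ a_n(q) q^n = ∑_{n=1}^∞ (∑_{i=1}^n f(i)) q^n (q^{n+1})_∞`. -/
theorem generating_function_value (q : ℝ) (hq0 : 0 < q) (hq1 : q < 1)
    (d : ℕ) (c : ℕ → ℚ) (f : ℕ → ℝ)
    (hf : ∀ n : ℕ, f n = ∑ k ∈ Finset.range (d + 1), (c k : ℝ) * (n : ℝ) ^ k)
    (a : ℕ → ℝ) (ha0 : a 0 = 1)
    (ha : ∀ n : ℕ, a (n + 1) = f (n + 1) + (1 - q ^ n) * a n) :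
    ∑' n : ℕ, a (n + 1) * q ^ (n + 1)
    = ∑' n : ℕ, (∑ i ∈ Finset.Icc 1 (n + 1), f i) * q ^ (n + 1) *
        ∏' j : ℕ, (1 - q ^ (n + 2 + j)) := by
  have hq1' : (0:ℝ) < 1 - q := by linarith
  have hpowpos : ∀ e : ℕ, 0 < q ^ e := fun e => pow_pos hq0 e
  have hpowle : ∀ e : ℕ, 1 ≤ e → q ^ e ≤ q := by
    intro e he
    calc q ^ e ≤ q ^ 1 := pow_le_pow_of_le_one hq0.le hq1.le he
      _ = q := pow_one q
  have hfacpos : ∀ m j : ℕ, 0 < 1 - q ^ (m + 1 + j) := by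
    intro m j
    have := hpowle (m + 1 + j) (by omega)
    linarith
  -- summability of the logs
  have hlogsum : ∀ m : ℕ, Summable fun j : ℕ => Real.log (1 - q ^ (m + 1 + j)) := by
    intro m
    apply Summable.of_norm_bounded (g := fun j => q ^ (m + 1 + j) / (1 - q))
    · have h : Summable fun j : ℕ => (q ^ (m + 1) / (1 - q)) * q ^ j :=
        (summable_geometric_of_lt_one hq0.le hq1).mul_left _
      refine h.congr fun j => ?_
      rw [pow_add]
      ring
    · intro j
      have h1 : 0 < 1 - q ^ (m + 1 + j) := hfacpos m j
      have h2 : q ^ (m + 1 + j) ≤ q := hpowle _ (by omega)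
      have h3 : Real.log (1 - q ^ (m + 1 + j))⁻¹ ≤ (1 - q ^ (m + 1 + j))⁻¹ - 1 :=
        Real.log_le_sub_one_of_pos (inv_pos.2 h1)
      rw [Real.log_inv] at h3
      have h4 : |Real.log (1 - q ^ (m + 1 + j))| = -Real.log (1 - q ^ (m + 1 + j)) :=
        abs_of_nonpos (Real.log_nonpos (by linarith [hpowpos (m + 1 + j)])
          (by linarith [hpowpos (m + 1 + j)]))
      have h5 : (1 - q ^ (m + 1 + j))⁻¹ - 1 = q ^ (m + 1 + j) / (1 - q ^ (m + 1 + j)) := by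
        field_simp
        ring
      have h6 : q ^ (m + 1 + j) / (1 - q ^ (m + 1 + j)) ≤ q ^ (m + 1 + j) / (1 - q) := by
        gcongr <;> linarith [hpowpos (m + 1 + j)]
      rw [Real.norm_eq_abs, h4]
      linarith
  -- the infinite products
  have hProd : ∀ m : ℕ, HasProd (fun j : ℕ => 1 - q ^ (m + 1 + j))
      (Real.exp (∑' j : ℕ, Real.log (1 - q ^ (m + 1 + j)))) := by
    intro m
    have h := (hlogsum m).hasSum.rexp
    have hfun : (rexp ∘ fun j : ℕ => Real.log (1 - q ^ (m + 1 + j)))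
        = fun j : ℕ => 1 - q ^ (m + 1 + j) := by
      funext j
      simp [Function.comp, Real.exp_log (hfacpos m j)]
    rwa [hfun] at h
  set Q : ℕ → ℝ := fun m => ∏' j : ℕ, (1 - q ^ (m + 1 + j)) with hQdef
  have hQeq : ∀ m, Q m = Real.exp (∑' j : ℕ, Real.log (1 - q ^ (m + 1 + j))) := by
    intro m
    simp only [hQdef]
    exact (hProd m).tprod_eq
  have hQpos : ∀ m, 0 < Q m := fun m => (hQeq m) ▸ Real.exp_pos _
  have hQle1 : ∀ m, Q m ≤ 1 := by
    intro m
    rw [hQeq m, Real.exp_le_one_iff]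
    apply tsum_nonpos
    intro j
    exact Real.log_nonpos (by linarith [hfacpos m j]) (by linarith [hpowpos (m + 1 + j)])
  have hQlb : ∀ m, 1 - q ^ (m + 1) / (1 - q) ≤ Q m := by
    intro m
    rw [hQeq m]
    refine ge_of_tendsto' (hProd m).tendsto_prod_nat fun k => ?_
    have h1 := weier_aux (fun j => q ^ (m + 1 + j)) (fun j => (hpowpos _).le)
      (fun j => by linarith [hfacpos m j]) k
    have h2 : ∑ j ∈ Finset.range k, q ^ (m + 1 + j) ≤ q ^ (m + 1) / (1 - q) := by
      have he : ∑ j ∈ Finset.range k, q ^ (m + 1 + j)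
          = q ^ (m + 1) * ∑ j ∈ Finset.range k, q ^ j := by
        rw [Finset.mul_sum]
        exact Finset.sum_congr rfl fun j _ => by rw [pow_add]
      have hg : ∑ j ∈ Finset.range k, q ^ j ≤ (1 - q)⁻¹ := by
        have := Summable.sum_le_tsum (Finset.range k) (fun i _ => (hpowpos i).le)
          (summable_geometric_of_lt_one hq0.le hq1)
        rwa [tsum_geometric_of_lt_one hq0.le hq1] at this
      rw [he, div_eq_mul_inv]
      exact mul_le_mul_of_nonneg_left hg (hpowpos _).le
    linarith
  have hQtend : Tendsto Q atTop (𝓝 1) := by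
    have h0 : Tendsto (fun m : ℕ => q ^ (m + 1)) atTop (𝓝 0) :=
      (tendsto_pow_atTop_nhds_zero_of_lt_one hq0.le hq1).comp (tendsto_add_atTop_nat 1)
    have hlow : Tendsto (fun m : ℕ => 1 - q ^ (m + 1) / (1 - q)) atTop (𝓝 1) := by
      have h1 := tendsto_const_nhds (x := (1:ℝ)) (f := atTop (α := ℕ)) |>.sub (h0.div_const (1 - q))
      simpa using h1
    exact tendsto_of_tendsto_of_tendsto_of_le_of_le hlow tendsto_const_nhds hQlb hQle1
  have hQsplit : ∀ m, Q m = (1 - q ^ (m + 1)) * Q (m + 1) := by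
    intro m
    have h2 : (∏' j : ℕ, (1 - q ^ (m + 1 + (j + 1)))) = ∏' j : ℕ, (1 - q ^ (m + 1 + 1 + j)) :=
      tprod_congr fun j => by rw [show m + 1 + (j + 1) = m + 1 + 1 + j from by omega]
    have hm : Multipliable (fun j : ℕ => 1 - q ^ (m + 1 + (j + 1))) :=
      (hProd (m + 1)).multipliable.congr fun j => by
        rw [show m + 1 + 1 + j = m + 1 + (j + 1) from by omega]
    simp only [hQdef]
    rw [tprod_eq_zero_mul' (f := fun j : ℕ => 1 - q ^ (m + 1 + j)) hm, h2]
  -- the two key induction identities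
  have hA : ∀ N : ℕ, (∑ n ∈ Finset.range N, a (n + 1) * q ^ (n + 1)) + a (N + 1)
      = ∑ i ∈ Finset.Icc 1 (N + 1), f i := by
    intro N
    induction N with
    | zero => simp [ha 0, ha0]
    | succ N ih =>
      rw [Finset.sum_range_succ, Finset.sum_Icc_succ_top (by omega), ← ih, ha (N + 1)]
      ring
  have hB : ∀ N : ℕ,
      ∑ n ∈ Finset.range N, (∑ i ∈ Finset.Icc 1 (n + 1), f i) * q ^ (n + 1) * Q (n + 1)
      = Q N * ∑ n ∈ Finset.range N, a (n + 1) * q ^ (n + 1) := by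
    intro N
    induction N with
    | zero => simp
    | succ N ih =>
      rw [Finset.sum_range_succ, Finset.sum_range_succ, ih, hQsplit N]
      have haN : a (N + 1) = (∑ i ∈ Finset.Icc 1 (N + 1), f i)
          - ∑ n ∈ Finset.range N, a (n + 1) * q ^ (n + 1) := by
        linarith [hA N]
      rw [haN]
      ring
  -- polynomial bounds
  set C : ℝ := ∑ k ∈ Finset.range (d + 1), |(c k : ℝ)| with hCdef
  have hC : 0 ≤ C := Finset.sum_nonneg fun _ _ => abs_nonneg _
  have hfb : ∀ i : ℕ, |f i| ≤ C * ((i : ℝ) + 1) ^ d := by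
    intro i
    rw [hf i]
    calc |∑ k ∈ Finset.range (d + 1), (c k : ℝ) * (i : ℝ) ^ k|
        ≤ ∑ k ∈ Finset.range (d + 1), |(c k : ℝ) * (i : ℝ) ^ k| :=
          Finset.abs_sum_le_sum_abs _ _
      _ ≤ ∑ k ∈ Finset.range (d + 1), |(c k : ℝ)| * ((i : ℝ) + 1) ^ d := by
          apply Finset.sum_le_sum
          intro k hk
          rw [abs_mul]
          apply mul_le_mul_of_nonneg_left _ (abs_nonneg _)
          rw [abs_pow, abs_of_nonneg (Nat.cast_nonneg i)]
          calc (i : ℝ) ^ k ≤ ((i : ℝ) + 1) ^ k :=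
                pow_le_pow_left₀ (Nat.cast_nonneg i) (by linarith) k
            _ ≤ ((i : ℝ) + 1) ^ d :=
                pow_le_pow_right₀ (by have : (0:ℝ) ≤ (i:ℝ) := Nat.cast_nonneg i; linarith)
                  (Finset.mem_range_succ_iff.mp hk)
      _ = C * ((i : ℝ) + 1) ^ d := by rw [hCdef, Finset.sum_mul]
  have hSb : ∀ n : ℕ, |∑ i ∈ Finset.Icc 1 (n + 1), f i| ≤ C * ((n : ℝ) + 2) ^ (d + 1) := by
    intro n
    have hsum : ∑ i ∈ Finset.Icc 1 (n + 1), |f i|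
        ≤ ∑ i ∈ Finset.Icc 1 (n + 1), C * ((n : ℝ) + 2) ^ d := by
      apply Finset.sum_le_sum
      intro i hi
      refine (hfb i).trans ?_
      apply mul_le_mul_of_nonneg_left _ hC
      apply pow_le_pow_left₀ (by positivity)
      have h := (Finset.mem_Icc.mp hi).2
      have : (i : ℝ) ≤ (n : ℝ) + 1 := by exact_mod_cast h
      linarith
    have hcard : ∑ i ∈ Finset.Icc 1 (n + 1), C * ((n : ℝ) + 2) ^ d
        = ((n : ℝ) + 1) * (C * ((n : ℝ) + 2) ^ d) := by
      rw [Finset.sum_const, Nat.card_Icc]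
      push_cast
      ring
    have hstep : ((n : ℝ) + 1) * (C * ((n : ℝ) + 2) ^ d) ≤ C * ((n : ℝ) + 2) ^ (d + 1) := by
      rw [pow_succ]
      nlinarith [pow_nonneg (show (0:ℝ) ≤ (n : ℝ) + 2 by positivity) d, hC]
    calc |∑ i ∈ Finset.Icc 1 (n + 1), f i| ≤ ∑ i ∈ Finset.Icc 1 (n + 1), |f i| :=
          Finset.abs_sum_le_sum_abs _ _
      _ ≤ ((n : ℝ) + 1) * (C * ((n : ℝ) + 2) ^ d) := by rw [← hcard]; exact hsum
      _ ≤ C * ((n : ℝ) + 2) ^ (d + 1) := hstep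
  have hab : ∀ n : ℕ, |a n| ≤ 1 + ∑ i ∈ Finset.range n, |f (i + 1)| := by
    intro n
    induction n with
    | zero => simp [ha0]
    | succ n ih =>
      rw [ha n, Finset.sum_range_succ]
      have h1 : 0 ≤ 1 - q ^ n := by linarith [pow_le_one₀ hq0.le hq1.le (n := n)]
      have h2 : 1 - q ^ n ≤ 1 := by linarith [hpowpos n]
      calc |f (n + 1) + (1 - q ^ n) * a n| ≤ |f (n + 1)| + (1 - q ^ n) * |a n| := by
            refine (abs_add_le _ _).trans ?_
            rw [abs_mul, abs_of_nonneg h1]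
        _ ≤ |f (n + 1)| + |a n| := by nlinarith [abs_nonneg (a n)]
        _ ≤ 1 + (∑ i ∈ Finset.range n, |f (i + 1)| + |f (n + 1)|) := by linarith
  have ha1b : ∀ n : ℕ, |a (n + 1)| ≤ (1 + C) * ((n : ℝ) + 2) ^ (d + 1) := by
    intro n
    have h1 := hab (n + 1)
    have h2 : ∑ i ∈ Finset.range (n + 1), |f (i + 1)| ≤ ((n : ℝ) + 1) * (C * ((n : ℝ) + 2) ^ d) := by
      calc ∑ i ∈ Finset.range (n + 1), |f (i + 1)|
          ≤ ∑ i ∈ Finset.range (n + 1), C * ((n : ℝ) + 2) ^ d := by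
            apply Finset.sum_le_sum
            intro i hi
            refine (hfb (i + 1)).trans ?_
            apply mul_le_mul_of_nonneg_left _ hC
            apply pow_le_pow_left₀ (by positivity)
            have h := Nat.lt_succ_iff.mp (Finset.mem_range.mp hi)
            have : (i : ℝ) ≤ (n : ℝ) := by exact_mod_cast h
            push_cast
            linarith
        _ = ((n : ℝ) + 1) * (C * ((n : ℝ) + 2) ^ d) := by
            rw [Finset.sum_const, Finset.card_range]
            push_cast
            ring
    have h3 : (1 : ℝ) ≤ ((n : ℝ) + 2) ^ (d + 1) :=
      one_le_pow₀ (by have : (0:ℝ) ≤ (n:ℝ) := Nat.cast_nonneg n; linarith)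
    have h4 : ((n : ℝ) + 1) * (C * ((n : ℝ) + 2) ^ d) ≤ C * ((n : ℝ) + 2) ^ (d + 1) := by
      rw [pow_succ]
      nlinarith [pow_nonneg (show (0:ℝ) ≤ (n : ℝ) + 2 by positivity) d, hC]
    have h5 : (1 + C) * ((n : ℝ) + 2) ^ (d + 1)
        = ((n : ℝ) + 2) ^ (d + 1) + C * ((n : ℝ) + 2) ^ (d + 1) := by ring
    linarith
  -- the summable majorant
  have hgsum : Summable (fun n : ℕ => (1 + C) * ((n : ℝ) + 2) ^ (d + 1) * q ^ (n + 1)) := by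
    have h0 : Summable (fun n : ℕ => (n : ℝ) ^ (d + 1) * q ^ n) :=
      summable_pow_mul_geometric_of_norm_lt_one (d + 1)
        (by rw [Real.norm_eq_abs, abs_of_pos hq0]; exact hq1)
    have h1 : Summable (fun n : ℕ => ((n : ℝ) + 2) ^ (d + 1) * q ^ (n + 2)) := by
      have h := (summable_nat_add_iff 2).mpr h0
      refine h.congr fun n => ?_
      push_cast
      ring
    have h2 := h1.mul_left ((1 + C) / q)
    refine h2.congr fun n => ?_
    have hqne : q ≠ 0 := ne_of_gt hq0
    field_simp
    ring
  have hLs : Summable (fun n : ℕ => a (n + 1) * q ^ (n + 1)) := by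
    refine Summable.of_norm_bounded hgsum fun n => ?_
    rw [Real.norm_eq_abs, abs_mul, abs_pow, abs_of_pos hq0]
    exact mul_le_mul_of_nonneg_right (ha1b n) (by positivity)
  have hRs : Summable (fun n : ℕ =>
      (∑ i ∈ Finset.Icc 1 (n + 1), f i) * q ^ (n + 1) * Q (n + 1)) := by
    refine Summable.of_norm_bounded hgsum fun n => ?_
    rw [Real.norm_eq_abs, abs_mul, abs_mul, abs_pow, abs_of_pos hq0,
      abs_of_pos (hQpos (n + 1))]
    calc |∑ i ∈ Finset.Icc 1 (n + 1), f i| * q ^ (n + 1) * Q (n + 1)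
        ≤ |∑ i ∈ Finset.Icc 1 (n + 1), f i| * q ^ (n + 1) * 1 := by
          apply mul_le_mul_of_nonneg_left (hQle1 (n + 1)) (by positivity)
      _ = |∑ i ∈ Finset.Icc 1 (n + 1), f i| * q ^ (n + 1) := by ring
      _ ≤ C * ((n : ℝ) + 2) ^ (d + 1) * q ^ (n + 1) :=
          mul_le_mul_of_nonneg_right (hSb n) (by positivity)
      _ ≤ (1 + C) * ((n : ℝ) + 2) ^ (d + 1) * q ^ (n + 1) := by
          nlinarith [mul_nonneg (pow_nonneg (show (0:ℝ) ≤ (n : ℝ) + 2 by positivity) (d + 1))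
            (pow_pos hq0 (n + 1)).le]
  -- assemble the limits
  have hLL : Tendsto (fun N => ∑ n ∈ Finset.range N, a (n + 1) * q ^ (n + 1)) atTop
      (𝓝 (∑' n : ℕ, a (n + 1) * q ^ (n + 1))) := hLs.hasSum.tendsto_sum_nat
  have hRtend : Tendsto (fun N => ∑ n ∈ Finset.range N,
      (∑ i ∈ Finset.Icc 1 (n + 1), f i) * q ^ (n + 1) * Q (n + 1)) atTop
      (𝓝 (∑' n : ℕ, a (n + 1) * q ^ (n + 1))) := by
    have h := hQtend.mul hLL
    rw [one_mul] at h
    exact h.congr fun N => (hB N).symm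
  have hRtsum : Tendsto (fun N => ∑ n ∈ Finset.range N,
      (∑ i ∈ Finset.Icc 1 (n + 1), f i) * q ^ (n + 1) * Q (n + 1)) atTop
      (𝓝 (∑' n : ℕ, (∑ i ∈ Finset.Icc 1 (n + 1), f i) * q ^ (n + 1) * Q (n + 1))) :=
    hRs.hasSum.tendsto_sum_nat
  have hmain : (∑' n : ℕ, a (n + 1) * q ^ (n + 1))
      = ∑' n : ℕ, (∑ i ∈ Finset.Icc 1 (n + 1), f i) * q ^ (n + 1) * Q (n + 1) :=
    tendsto_nhds_unique hRtend hRtsum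
  rw [hmain]
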